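/- Let m ≥ 1, τ ≥ 0, Qmax ≥ 0, and let x : Fin m → ℝ satisfy max_i x_i − min_i x_i ≤ 2·Qmax. Then max_i x_i − g_x(τ) ≤ (m − 1) · max{ 1/(τ + 2), 2·Qmax/(1 + exp(τ)) }. -/

import Mathlib

/-- The softmax-weighted value `g_x(τ) = (∑ i, exp(τ·x_i)·x_i) / (∑ i, exp(τ·x_i))`. -/
noncomputable def gval {m : ℕ} (x : Fin m → ℝ) (τ : ℝ) : ℝ :=
  (∑ i, Real.exp (τ * x i) * x i) / (∑ i, Real.exp (τ * x i))

/-- The maximum coordinate of `x : Fin m → ℝ`, for `m ≥ 1`. -/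
noncomputable def maxVal {m : ℕ} (hm : 1 ≤ m) (x : Fin m → ℝ) : ℝ :=
  Finset.univ.sup' ⟨⟨0, hm⟩, Finset.mem_univ _⟩ x

/-- The minimum coordinate of `x : Fin m → ℝ`, for `m ≥ 1`. -/
noncomputable def minVal {m : ℕ} (hm : 1 ≤ m) (x : Fin m → ℝ) : ℝ :=
  Finset.univ.inf' ⟨⟨0, hm⟩, Finset.mem_univ _⟩ x

lemma key_pointwise (τ Qmax d : ℝ) (hτ : 0 ≤ τ) (hd : 0 ≤ d) (hdQ : d ≤ 2*Qmax) :
    d / (Real.exp (τ * d) + 1) ≤ max (1 / (τ + 2)) (2 * Qmax / (1 + Real.exp τ)) := by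
  have hpos : 0 < Real.exp (τ * d) + 1 := by positivity
  rcases le_total d 1 with h1 | h1
  · refine le_max_of_le_left ?_
    rw [div_le_div_iff₀ hpos (by linarith)]
    nlinarith [Real.add_one_le_exp (τ * d), mul_nonneg hτ hd]
  · refine le_max_of_le_right ?_
    have he : Real.exp τ ≤ Real.exp (τ * d) := Real.exp_le_exp.2 (by nlinarith)
    rw [div_le_div_iff₀ hpos (by positivity)]
    nlinarith [Real.exp_pos τ]

/-- Upper bound on the gap between the max and the softmax-weighted value, when the
spread of the values is bounded by `2·Qmax`:
`max_i x_i − g_x(τ) ≤ (m − 1) · max{1/(τ+2), 2·Qmax/(1 + exp τ)}`. -/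
theorem max_sub_softmax_upper_bound
    {m : ℕ} (hm : 1 ≤ m) (τ Qmax : ℝ) (hτ : 0 ≤ τ) (hQmax : 0 ≤ Qmax)
    (x : Fin m → ℝ) (hspread : maxVal hm x - minVal hm x ≤ 2 * Qmax) :
    maxVal hm x - gval x τ ≤
      ((m : ℝ) - 1) * max (1 / (τ + 2)) (2 * Qmax / (1 + Real.exp τ)) := by
  obtain ⟨i0, -, hi0⟩ := Finset.exists_mem_eq_sup' (⟨⟨0, hm⟩, Finset.mem_univ _⟩ :
    (Finset.univ : Finset (Fin m)).Nonempty) x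
  set B := max (1 / (τ + 2)) (2 * Qmax / (1 + Real.exp τ)) with hB
  have hBnn : 0 ≤ B := le_trans (by positivity) (le_max_left _ _)
  set M := maxVal hm x with hM
  have hMi0 : M = x i0 := hi0
  have hxM : ∀ i, x i ≤ M := fun i => Finset.le_sup' x (Finset.mem_univ i)
  have hdQ : ∀ i, M - x i ≤ 2 * Qmax := by
    intro i
    have : minVal hm x ≤ x i := Finset.inf'_le x (Finset.mem_univ i)
    have := hspread
    linarith
  have hS0pos : 0 < ∑ i, Real.exp (τ * x i) :=
    Finset.sum_pos (fun i _ => Real.exp_pos _) ⟨i0, Finset.mem_univ _⟩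
  have hgap : M - gval x τ =
      ∑ i, Real.exp (τ * x i) * (M - x i) / (∑ j, Real.exp (τ * x j)) := by
    rw [gval, ← Finset.sum_div, eq_div_iff hS0pos.ne', sub_mul,
      div_mul_cancel₀ _ hS0pos.ne', Finset.mul_sum, ← Finset.sum_sub_distrib]
    congr 1; ext i; ring
  rw [hgap]
  -- bound each term for i ≠ i0
  have hterm : ∀ i ∈ (Finset.univ : Finset (Fin m)).erase i0,
      Real.exp (τ * x i) * (M - x i) / (∑ j, Real.exp (τ * x j)) ≤ B := by
    intro i hi
    have hne : i ≠ i0 := (Finset.mem_erase.mp hi).1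
    have hd : 0 ≤ M - x i := by linarith [hxM i]
    have hsub : Real.exp (τ * x i0) + Real.exp (τ * x i) ≤ ∑ j, Real.exp (τ * x j) := by
      have := Finset.sum_le_sum_of_subset_of_nonneg
        (Finset.subset_univ ({i0, i} : Finset (Fin m)))
        (fun j _ _ => (Real.exp_pos (τ * x j)).le)
      rwa [Finset.sum_pair (Ne.symm hne)] at this
    have hpairpos : 0 < Real.exp (τ * x i0) + Real.exp (τ * x i) := by positivity
    have h1 : Real.exp (τ * x i) * (M - x i) / (∑ j, Real.exp (τ * x j)) ≤
        Real.exp (τ * x i) * (M - x i) / (Real.exp (τ * x i0) + Real.exp (τ * x i)) :=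
      div_le_div_of_nonneg_left (by positivity) hpairpos hsub
    have heq : Real.exp (τ * x i) * (M - x i) / (Real.exp (τ * x i0) + Real.exp (τ * x i))
        = (M - x i) / (Real.exp (τ * (M - x i)) + 1) := by
      have hexp : Real.exp (τ * x i0) = Real.exp (τ * (M - x i)) * Real.exp (τ * x i) := by
        rw [← Real.exp_add, ← hMi0]; ring_nf
      rw [hexp]
      rw [div_eq_div_iff (by positivity) (by positivity)]
      ring
    calc Real.exp (τ * x i) * (M - x i) / (∑ j, Real.exp (τ * x j))
        ≤ (M - x i) / (Real.exp (τ * (M - x i)) + 1) := heq ▸ h1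
      _ ≤ B := key_pointwise τ Qmax (M - x i) hτ hd (hdQ i)
  have hi0term : Real.exp (τ * x i0) * (M - x i0) / (∑ j, Real.exp (τ * x j)) = 0 := by
    rw [← hMi0]; simp
  rw [← Finset.add_sum_erase _ _ (Finset.mem_univ i0), hi0term, zero_add]
  calc (∑ i ∈ Finset.univ.erase i0,
        Real.exp (τ * x i) * (M - x i) / (∑ j, Real.exp (τ * x j)))
      ≤ (Finset.univ.erase i0).card • B := Finset.sum_le_card_nsmul _ _ B hterm
    _ = ((m : ℝ) - 1) * B := by
        rw [Finset.card_erase_of_mem (Finset.mem_univ i0), Finset.card_univ,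
          Fintype.card_fin, nsmul_eq_mul, Nat.cast_sub hm]
        norm_num
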